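/- Let a, b, c > 0 and define T* = ∞ if 4ac ≤ b², and T* = πa/√(4ac−b²) + (2a/√(4ac−b²)) · arcsin(b/(2√(ac))) if 4ac > b². Let I ⊆ ℝ be a connected interval and y : I → ℝ a continuous function such that for every subinterval J ⊆ I on which y > 0 pointwise, y is twice continuously differentiable on J and a ÿ(t) + b ẏ(t) + c y(t) > 0 for all t ∈ J. If there exists t₀ ∈ I with y(t₀) > 0 and ẏ(t₀) ≥ 0, then y(t) > 0 for all t ∈ I ∩ [t₀, t₀ + T*] (all t ∈ I with t ≥ t₀, in the case T* = ∞). -/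

import Mathlib

open Set Real Filter Topology


/-- Lemma 5.1 (Sturm–Picone comparison principle): if `y` is positive with
nonnegative derivative at `t₀` and satisfies `a ÿ + b ẏ + c y > 0` on every
subinterval of `I` where it is positive, then `y` stays positive on
`I ∩ [t₀, t₀ + T*]`, where `T* = ∞` when `4ac ≤ b²` and
`T* = πa/√(4ac−b²) + (2a/√(4ac−b²))·arcsin(b/(2√(ac)))` when `4ac > b²`. -/
lemma sturm_core (a b c : ℝ) (ha : 0 < a) (hc : 0 < c)
    (I : Set ℝ) (hI : I.OrdConnected)
    (y : ℝ → ℝ) (hy : ContinuousOn y I)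
    (hode : ∀ J : Set ℝ, J ⊆ I → J.OrdConnected → (∀ t ∈ J, 0 < y t) →
      ContDiffOn ℝ 2 y J ∧
      ∀ t ∈ J, 0 < a * derivWithin (derivWithin y J) J t + b * derivWithin y J t + c * y t)
    (t₀ : ℝ) (ht₀ : t₀ ∈ I) (hyt₀ : 0 < y t₀) (hyt₀' : 0 ≤ derivWithin y I t₀)
    (z z' z'' : ℝ → ℝ)
    (hz1 : ∀ s, HasDerivAt z (z' s) s) (hz2 : ∀ s, HasDerivAt z' (z'' s) s)
    (hzode : ∀ s, a * z'' s + b * z' s + c * z s = 0)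
    (hzt₀ : 0 < z t₀) (hz't₀ : z' t₀ ≤ 0)
    (t : ℝ) (htI : t ∈ I) (ht : t₀ ≤ t)
    (hzpos : ∀ s, t₀ ≤ s → s < t → 0 < z s) :
    0 < y t := by
  by_contra hcon
  push_neg at hcon
  have htt : t₀ < t := by
    rcases eq_or_lt_of_le ht with rfl | h
    · exact absurd hyt₀ (not_lt.2 hcon)
    · exact h
  have hIcc : Icc t₀ t ⊆ I := hI.out ht₀ htI
  -- first zero t₁
  set S : Set ℝ := {s | s ∈ Icc t₀ t ∧ y s ≤ 0} with hS
  have hSne : S.Nonempty := ⟨t, ⟨le_of_lt htt, le_rfl⟩, hcon⟩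
  have hSbdd : BddBelow S := ⟨t₀, fun s hs => hs.1.1⟩
  have hSclosed : IsClosed S := by
    have hSeq : S = Icc t₀ t ∩ y ⁻¹' Iic 0 := by ext s; simp only [hS, mem_setOf_eq, mem_inter_iff, mem_preimage, mem_Iic]
    rw [hSeq]
    exact ContinuousOn.preimage_isClosed_of_isClosed (hy.mono hIcc) isClosed_Icc isClosed_Iic
  set t₁ := sInf S with ht₁def
  have ht₁S : t₁ ∈ S := hSclosed.csInf_mem hSne hSbdd
  have ht₁Icc : t₁ ∈ Icc t₀ t := ht₁S.1
  have hyt₁ : y t₁ ≤ 0 := ht₁S.2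
  have ht₀t₁ : t₀ < t₁ := by
    rcases eq_or_lt_of_le ht₁Icc.1 with h | h
    · exact absurd hyt₁ (not_le.2 (h ▸ hyt₀))
    · exact h
  have hpos : ∀ s ∈ Ico t₀ t₁, 0 < y s := by
    intro s hs
    by_contra hns
    push_neg at hns
    have : s ∈ S := ⟨⟨hs.1, hs.2.le.trans ht₁Icc.2⟩, hns⟩
    exact absurd (csInf_le hSbdd this) (not_le.2 hs.2)
  have hIccI : Icc t₀ t₁ ⊆ I := (Icc_subset_Icc_right ht₁Icc.2).trans hIcc
  have hy01 : y t₁ = 0 := by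
    refine le_antisymm hyt₁ ?_
    have hne : (𝓝[Ico t₀ t₁] t₁).NeBot := by
      rw [← mem_closure_iff_nhdsWithin_neBot, closure_Ico (ne_of_lt ht₀t₁)]
      exact ⟨ht₀t₁.le, le_rfl⟩
    have htd : Filter.Tendsto y (𝓝[Ico t₀ t₁] t₁) (𝓝 (y t₁)) := by
      have h1 := (hy.mono hIccI) t₁ ⟨ht₀t₁.le, le_rfl⟩
      exact h1.mono_left (nhdsWithin_mono _ Ico_subset_Icc_self)
    exact ge_of_tendsto htd (Filter.eventually_of_mem self_mem_nhdsWithin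
      (fun s hs => (hpos s hs).le))
  -- ODE data on J = Ico t₀ t₁
  set J := Ico t₀ t₁ with hJdef
  have hJI : J ⊆ I := Ico_subset_Icc_self.trans hIccI
  obtain ⟨hC2, hL⟩ := hode J hJI Set.ordConnected_Ico hpos
  have hJu : UniqueDiffOn ℝ J := uniqueDiffOn_Ico t₀ t₁
  set Y' := derivWithin y J with hY'def
  set Y'' := derivWithin Y' J with hY''def
  have hyd : DifferentiableOn ℝ y J := hC2.differentiableOn (by norm_num)
  have hY'c1 : ContDiffOn ℝ 1 Y' J := hC2.derivWithin hJu (by norm_num)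
  have hzdiff : Differentiable ℝ z := fun s => (hz1 s).differentiableAt
  have hz'diff : Differentiable ℝ z' := fun s => (hz2 s).differentiableAt
  have hzc : Continuous z := hzdiff.continuous
  have hz'c : Continuous z' := hz'diff.continuous
  -- the weighted Wronskian
  set E : ℝ → ℝ := fun s => Real.exp (b / a * s) with hEdef
  have hEc : Continuous E := Real.continuous_exp.comp (continuous_const.mul continuous_id)
  have hEd : ∀ s, HasDerivAt E (E s * (b / a)) s := by
    intro s
    simpa using ((hasDerivAt_id s).const_mul (b / a)).exp
  set W : ℝ → ℝ := fun s => (Y' s * z s - y s * z' s) * E s with hWdef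
  have hWc : ContinuousOn W J := by
    exact ((hY'c1.continuousOn.mul hzc.continuousOn).sub
      ((hy.mono hJI).mul hz'c.continuousOn)).mul hEc.continuousOn
  -- derivatives at interior points
  have hYA : ∀ x ∈ Ioo t₀ t₁, HasDerivAt y (Y' x) x := by
    intro x hx
    have hnx : J ∈ 𝓝 x := Ico_mem_nhds hx.1 hx.2
    exact ((hyd x ⟨hx.1.le, hx.2⟩).hasDerivWithinAt).hasDerivAt hnx
  have hY'A : ∀ x ∈ Ioo t₀ t₁, HasDerivAt Y' (Y'' x) x := by
    intro x hx
    have hnx : J ∈ 𝓝 x := Ico_mem_nhds hx.1 hx.2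
    exact ((hY'c1.differentiableOn one_ne_zero x ⟨hx.1.le, hx.2⟩).hasDerivWithinAt).hasDerivAt hnx
  have hWA : ∀ x ∈ Ioo t₀ t₁, HasDerivAt W
      ((Y'' x * z x + Y' x * z' x - (Y' x * z' x + y x * z'' x)) * E x +
        (Y' x * z x - y x * z' x) * (E x * (b / a))) x := by
    intro x hx
    exact (((hY'A x hx).mul (hz1 x)).sub ((hYA x hx).mul (hz2 x))).mul (hEd x)
  have hWpos : ∀ x ∈ Ioo t₀ t₁, 0 < deriv W x := by
    intro x hx
    have hxJ : x ∈ J := ⟨hx.1.le, hx.2⟩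
    rw [(hWA x hx).deriv]
    have hz'' : z'' x = -(b * z' x + c * z x) / a := by
      have := hzode x
      field_simp
      linarith
    have hLx : 0 < a * Y'' x + b * Y' x + c * y x := hL x hxJ
    have hzx : 0 < z x := hzpos x hx.1.le (hx.2.trans_le ht₁Icc.2)
    have hex : 0 < E x := Real.exp_pos _
    have key : (Y'' x * z x + Y' x * z' x - (Y' x * z' x + y x * z'' x)) * E x +
        (Y' x * z x - y x * z' x) * (E x * (b / a)) =
        E x * ((a * Y'' x + b * Y' x + c * y x) * z x) / a := by
      rw [hz'']
      field_simp
      ring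
    rw [key]
    positivity
  have hmono : StrictMonoOn W J :=
    strictMonoOn_of_deriv_pos (convex_Ico t₀ t₁) hWc (by rwa [interior_Ico])
  -- W t₀ ≥ 0 : relate derivWithin over I and over J at t₀
  have hYt₀ : 0 ≤ Y' t₀ := by
    have hct₀ : ContinuousWithinAt y I t₀ := hy t₀ ht₀
    have hmem : y ⁻¹' Ioi 0 ∈ 𝓝[I] t₀ := hct₀ (Ioi_mem_nhds hyt₀)
    obtain ⟨ε, hε, hball⟩ := Metric.mem_nhdsWithin_iff.1 hmem
    set J₀ := Metric.ball t₀ ε ∩ I with hJ₀def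
    have hJ₀I : J₀ ⊆ I := inter_subset_right
    have hJ₀ord : J₀.OrdConnected := by
      rw [hJ₀def, Real.ball_eq_Ioo]
      exact Set.ordConnected_Ioo.inter hI
    have hJ₀pos : ∀ s ∈ J₀, 0 < y s := fun s hs => hball hs
    obtain ⟨hC2₀, -⟩ := hode J₀ hJ₀I hJ₀ord hJ₀pos
    have ht₀J₀ : t₀ ∈ J₀ := ⟨Metric.mem_ball_self hε, ht₀⟩
    have hdiff₀ : DifferentiableWithinAt ℝ y J₀ t₀ :=
      (hC2₀.differentiableOn (by norm_num)) t₀ ht₀J₀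
    set d := derivWithin y J₀ t₀ with hddef
    have hdd : HasDerivWithinAt y d J₀ t₀ := hdiff₀.hasDerivWithinAt
    have hnhd : J₀ ∈ 𝓝[I] t₀ :=
      Filter.inter_mem (mem_nhdsWithin_of_mem_nhds (Metric.ball_mem_nhds _ hε))
        self_mem_nhdsWithin
    have hdI : HasDerivWithinAt y d I t₀ := hdd.mono_of_mem_nhdsWithin hnhd
    have huI : UniqueDiffWithinAt ℝ I t₀ :=
      (uniqueDiffOn_Icc htt t₀ ⟨le_rfl, htt.le⟩).mono hIcc
    have h1 : derivWithin y I t₀ = d := hdI.derivWithin huI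
    have hdJ : HasDerivWithinAt y d J t₀ := hdI.mono hJI
    have h2 : Y' t₀ = d := hdJ.derivWithin (hJu t₀ ⟨le_rfl, ht₀t₁⟩)
    rw [h2, ← h1]
    exact hyt₀'
  have hW0 : 0 ≤ W t₀ := by
    have h1 : 0 ≤ Y' t₀ * z t₀ := mul_nonneg hYt₀ hzt₀.le
    have h2 : 0 ≤ -(y t₀ * z' t₀) := by nlinarith
    have h3 : 0 < E t₀ := Real.exp_pos _
    show 0 ≤ (Y' t₀ * z t₀ - y t₀ * z' t₀) * E t₀
    have : 0 ≤ Y' t₀ * z t₀ - y t₀ * z' t₀ := by linarith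
    exact mul_nonneg this h3.le
  -- pick midpoint and positive lower bound δ for W near t₁
  set s₀ := (t₀ + t₁) / 2 with hs₀def
  have hs₀ : s₀ ∈ Ioo t₀ t₁ := ⟨by linarith, by linarith⟩
  set δ := W s₀ with hδdef
  have hδ : 0 < δ :=
    lt_of_le_of_lt hW0 (hmono ⟨le_rfl, ht₀t₁⟩ ⟨hs₀.1.le, hs₀.2⟩ hs₀.1)
  -- P tends to 0 at t₁
  set P : ℝ → ℝ := fun s => y s * z' s * E s with hPdef
  have hPt₁ : P t₁ = 0 := by simp [hPdef, hy01]
  have hPcont : ContinuousWithinAt P (Icc t₀ t₁) t₁ := by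
    have := (((hy.mono hIccI).mul hz'c.continuousOn).mul hEc.continuousOn) t₁ ⟨ht₀t₁.le, le_rfl⟩
    exact this
  have hPev : {s : ℝ | -δ < P s} ∈ 𝓝[Icc t₀ t₁] t₁ := by
    have htd : Filter.Tendsto P (𝓝[Icc t₀ t₁] t₁) (𝓝 0) := hPt₁ ▸ hPcont
    exact htd (Ioi_mem_nhds (by linarith))
  obtain ⟨η, hη, hballP⟩ := Metric.mem_nhdsWithin_iff.1 hPev
  set u := max s₀ (t₁ - η / 2) with hudef
  have hu1 : u < t₁ := max_lt hs₀.2 (by linarith)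
  have hus₀ : s₀ ≤ u := le_max_left _ _
  have hut₀ : t₀ ≤ u := hs₀.1.le.trans hus₀
  have hPu : ∀ v, u ≤ v → v < t₁ → -δ < P v := by
    intro v hv1 hv2
    refine hballP ⟨?_, ⟨hut₀.trans hv1, hv2.le⟩⟩
    rw [Metric.mem_ball, Real.dist_eq, abs_sub_lt_iff]
    constructor
    · linarith
    · have : t₁ - η / 2 ≤ u := le_max_right _ _
      linarith
  -- MVT on [u, t₁]
  have hyuc : ContinuousOn y (Icc u t₁) :=
    hy.mono ((Icc_subset_Icc_left hut₀).trans hIccI)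
  have hmvt := exists_hasDerivAt_eq_slope y Y' hu1 hyuc
    (fun x hx => hYA x ⟨hut₀.trans_lt hx.1, hx.2⟩)
  obtain ⟨ξ, hξ, hξslope⟩ := hmvt
  have hyu : 0 < y u := hpos u ⟨hut₀, hu1⟩
  have hslope : Y' ξ < 0 := by
    rw [hξslope, hy01]
    apply div_neg_of_neg_of_pos <;> linarith
  have hξJ : ξ ∈ J := ⟨hut₀.trans hξ.1.le, hξ.2⟩
  have hWξ : δ ≤ W ξ := by
    have := hmono ⟨hs₀.1.le, hs₀.2⟩ hξJ (lt_of_le_of_lt hus₀ hξ.1)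
    exact this.le
  have hzξ : 0 < z ξ := hzpos ξ hξJ.1 (hξ.2.trans_le ht₁Icc.2)
  have hEξ : 0 < E ξ := Real.exp_pos _
  have hPξ : -δ < P ξ := hPu ξ hξ.1.le hξ.2
  have : W ξ < δ := by
    have h1 : W ξ = Y' ξ * z ξ * E ξ - P ξ := by show (Y' ξ * z ξ - y ξ * z' ξ) * E ξ = Y' ξ * z ξ * E ξ - y ξ * z' ξ * E ξ; ring
    nlinarith [mul_neg_of_neg_of_pos (mul_neg_of_neg_of_pos hslope hzξ) hEξ]
  linarith
set_option maxHeartbeats 2000000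

theorem stmt15 (a b c : ℝ) (ha : 0 < a) (hb : 0 < b) (hc : 0 < c)
    (I : Set ℝ) (hI : I.OrdConnected)
    (y : ℝ → ℝ) (hy : ContinuousOn y I)
    (hode : ∀ J : Set ℝ, J ⊆ I → J.OrdConnected → (∀ t ∈ J, 0 < y t) →
      ContDiffOn ℝ 2 y J ∧
      ∀ t ∈ J, 0 < a * derivWithin (derivWithin y J) J t + b * derivWithin y J t + c * y t)
    (t₀ : ℝ) (ht₀ : t₀ ∈ I) (hyt₀ : 0 < y t₀) (hyt₀' : 0 ≤ derivWithin y I t₀) :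
    (4 * a * c ≤ b ^ 2 → ∀ t ∈ I, t₀ ≤ t → 0 < y t) ∧
    (b ^ 2 < 4 * a * c → ∀ t ∈ I, t₀ ≤ t →
      t ≤ t₀ + (Real.pi * a / Real.sqrt (4 * a * c - b ^ 2) +
        2 * a / Real.sqrt (4 * a * c - b ^ 2) *
          Real.arcsin (b / (2 * Real.sqrt (a * c)))) →
      0 < y t) := by
  constructor
  · -- non-oscillatory case
    intro hble t htI ht
    set l := (-b + Real.sqrt (b ^ 2 - 4 * a * c)) / (2 * a) with hl
    have hsq : Real.sqrt (b ^ 2 - 4 * a * c) ^ 2 = b ^ 2 - 4 * a * c :=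
      Real.sq_sqrt (by linarith)
    have hq : a * l ^ 2 + b * l + c = 0 := by
      rw [hl]; generalize hr : Real.sqrt (b ^ 2 - 4 * a * c) = r at hsq ⊢; field_simp; nlinarith [hsq]
    have hl0 : l ≤ 0 := by
      have h1 : Real.sqrt (b ^ 2 - 4 * a * c) ≤ b := by
        have h2 : Real.sqrt (b ^ 2 - 4 * a * c) ≤ Real.sqrt (b ^ 2) :=
          Real.sqrt_le_sqrt (by nlinarith)
        rwa [Real.sqrt_sq hb.le] at h2
      rw [hl]
      apply div_nonpos_of_nonpos_of_nonneg <;> linarith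
    refine sturm_core a b c ha hc I hI y hy hode t₀ ht₀ hyt₀ hyt₀'
      (fun s => Real.exp (l * (s - t₀))) (fun s => Real.exp (l * (s - t₀)) * l)
      (fun s => Real.exp (l * (s - t₀)) * l * l) ?_ ?_ ?_ ?_ ?_ t htI ht ?_
    · intro s
      simpa using (((hasDerivAt_id s).sub_const t₀).const_mul l).exp
    · intro s
      simpa using ((((hasDerivAt_id s).sub_const t₀).const_mul l).exp.mul_const l)
    · intro s
      have h := hq
      linear_combination Real.exp (l * (s - t₀)) * hq
    · simp
    · simpa using hl0
    · intro s _ _; positivity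
  · -- oscillatory case
    intro hgt t htI ht htle
    set s4 := Real.sqrt (4 * a * c - b ^ 2) with hs4def
    have hs4pos : 0 < s4 := Real.sqrt_pos.2 (by linarith)
    have hs4sq : s4 ^ 2 = 4 * a * c - b ^ 2 := Real.sq_sqrt (by linarith)
    set ω := s4 / (2 * a) with hω
    have hωpos : 0 < ω := div_pos hs4pos (by linarith)
    set l := -b / (2 * a) with hl
    set φ := Real.arcsin (b / (2 * Real.sqrt (a * c))) with hφ
    have hacpos : 0 < Real.sqrt (a * c) := Real.sqrt_pos.2 (by positivity)
    have hacsq : Real.sqrt (a * c) ^ 2 = a * c := Real.sq_sqrt (by positivity)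
    have hblt : b < 2 * Real.sqrt (a * c) := by
      by_contra hcon
      push_neg at hcon
      nlinarith
    have hble1 : b / (2 * Real.sqrt (a * c)) < 1 := by
      rw [div_lt_one (by positivity)]; exact hblt
    have hbdiv : 0 ≤ b / (2 * Real.sqrt (a * c)) := div_nonneg hb.le (by positivity)
    have hφ0 : 0 ≤ φ := Real.arcsin_nonneg.2 hbdiv
    have hφlt : φ < π / 2 := Real.arcsin_lt_pi_div_two.2 hble1
    have hsinφ : Real.sin φ = b / (2 * Real.sqrt (a * c)) :=
      Real.sin_arcsin (by linarith) hble1.le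
    have hcosφ : Real.cos φ = s4 / (2 * Real.sqrt (a * c)) := by
      rw [hφ, Real.cos_arcsin]
      rw [show (1 : ℝ) - (b / (2 * Real.sqrt (a * c))) ^ 2 =
          (s4 / (2 * Real.sqrt (a * c))) ^ 2 by
        rw [div_pow, div_pow, mul_pow, hacsq, hs4sq]
        rw [eq_div_iff (by positivity)]
        field_simp
        ring]
      exact Real.sqrt_sq (by positivity)
    have hlω : l ^ 2 + ω ^ 2 = c / a := by
      rw [hl, hω]; field_simp; nlinarith [hs4sq]
    have hωT : ω * (π * a / s4 + 2 * a / s4 * φ) = π / 2 + φ := by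
      rw [hω]; field_simp
    refine sturm_core a b c ha hc I hI y hy hode t₀ ht₀ hyt₀ hyt₀'
      (fun s => Real.exp (l * (s - t₀)) *
        (Real.cos (ω * (s - t₀)) - l / ω * Real.sin (ω * (s - t₀))))
      (fun s => -(c / (a * ω)) * (Real.exp (l * (s - t₀)) * Real.sin (ω * (s - t₀))))
      (fun s => -(c / (a * ω)) * (Real.exp (l * (s - t₀)) *
        (l * Real.sin (ω * (s - t₀)) + ω * Real.cos (ω * (s - t₀)))))
      ?_ ?_ ?_ ?_ ?_ t htI ht ?_
    · intro s
      have hτl : HasDerivAt (fun x : ℝ => l * (x - t₀)) l s := by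
        simpa using ((hasDerivAt_id s).sub_const t₀).const_mul l
      have hτω : HasDerivAt (fun x : ℝ => ω * (x - t₀)) ω s := by
        simpa using ((hasDerivAt_id s).sub_const t₀).const_mul ω
      have h := hτl.exp.mul ((hτω.cos).sub ((hτω.sin).const_mul (l / ω)))
      refine h.congr_deriv ?_
      simp only [Pi.sub_apply]
      have hω0 : ω ≠ 0 := ne_of_gt hωpos
      have ha0 : a ≠ 0 := ne_of_gt ha
      clear_value s4 ω l φ
      have hca : c = a * l ^ 2 + a * ω ^ 2 := by
        field_simp at hlω
        linarith
      rw [hca]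
      field_simp
      ring
    · intro s
      have hτl : HasDerivAt (fun x : ℝ => l * (x - t₀)) l s := by
        simpa using ((hasDerivAt_id s).sub_const t₀).const_mul l
      have hτω : HasDerivAt (fun x : ℝ => ω * (x - t₀)) ω s := by
        simpa using ((hasDerivAt_id s).sub_const t₀).const_mul ω
      have h := (hτl.exp.mul hτω.sin).const_mul (-(c / (a * ω)))
      refine h.congr_deriv ?_
      ring
    · intro s
      have hω0 : ω ≠ 0 := ne_of_gt hωpos
      have ha0 : a ≠ 0 := ne_of_gt ha
      rw [hl]
      field_simp
      ring
    · simp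
    · simp
    · intro s hs1 hs2
      have h1 : 0 ≤ ω * (s - t₀) := mul_nonneg hωpos.le (by linarith)
      have h2 : ω * (s - t₀) < π / 2 + φ := by
        have h3 : s - t₀ < π * a / s4 + 2 * a / s4 * φ := by
          have := lt_of_lt_of_le hs2 htle
          linarith
        calc ω * (s - t₀) < ω * (π * a / s4 + 2 * a / s4 * φ) :=
              mul_lt_mul_of_pos_left h3 hωpos
          _ = π / 2 + φ := hωT
      have hcos1 : 0 < Real.cos (ω * (s - t₀) - φ) := by
        apply Real.cos_pos_of_mem_Ioo
        constructor
        · linarith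
        · linarith
      have hcosφpos : 0 < Real.cos φ := by
        apply Real.cos_pos_of_mem_Ioo
        constructor
        · have := Real.pi_pos; linarith
        · exact hφlt
      have hG : Real.cos (ω * (s - t₀)) - l / ω * Real.sin (ω * (s - t₀)) =
          Real.cos (ω * (s - t₀) - φ) / Real.cos φ := by
        rw [Real.cos_sub, hsinφ, hcosφ, hl, hω]
        field_simp
        ring
      have hfin : (0:ℝ) < Real.exp (l * (s - t₀)) *
          (Real.cos (ω * (s - t₀)) - l / ω * Real.sin (ω * (s - t₀))) := by
        rw [hG]
        positivity
      exact hfin
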